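/- arXiv:1808.09107 — 5 statements merged into one kernel-verified Lean document; each statement's English description precedes it below -/
import Mathlib

section
/- Let H = diag(H₁₁,…,H_qq) with H₁₁ ≥ H₂₂ ≥ ⋯ ≥ H_qq > 0 and let U = (U₁,…,U_q) be uniform on the unit sphere in ℝ^q. Define M_jj = E[H_jj U_j² / (Σ_k H_kk U_k²)]. Then M_jj ≥ M_{j+1,j+1} for all j = 1,…,q-1. -/
open MeasureTheory

private lemma key_frac' (A B a b S S' : ℝ) (hAB : B ≤ A) (hB : 0 ≤ B) (ha : 0 ≤ a) (hb : 0 ≤ b)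
    (hS : 0 < S) (hS' : 0 < S') (hSS : S' = S + (A - B) * (b - a))
    (hSge : A * a + B * b ≤ S) :
    B * b / S + B * a / S' ≤ A * a / S + A * b / S' := by
  rw [div_add_div _ _ (ne_of_gt hS) (ne_of_gt hS'), div_add_div _ _ (ne_of_gt hS) (ne_of_gt hS'),
    div_le_div_iff_of_pos_right (by positivity)]
  subst hSS
  nlinarith [mul_nonneg (sub_nonneg.2 hAB) (mul_nonneg ha hb),
    mul_nonneg (mul_nonneg (sub_nonneg.2 hAB) (add_nonneg ha hb)) (sub_nonneg.2 hSge),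
    mul_nonneg hB (mul_nonneg ha hb)]

private lemma sum_swap_eq' {q : ℕ} (H : Fin q → ℝ) {i j : Fin q} (hij : i ≠ j) (u : Fin q → ℝ) :
    ∑ k, H k * (u (Equiv.swap i j k)) ^ 2
      = ∑ k, H k * u k ^ 2 + (H i - H j) * (u j ^ 2 - u i ^ 2) := by
  have h1 : ∑ k, H k * (u (Equiv.swap i j k)) ^ 2 = ∑ k, H (Equiv.swap i j k) * u k ^ 2 := by
    rw [← Equiv.sum_comp (Equiv.swap i j) (fun k => H (Equiv.swap i j k) * u k ^ 2)]
    simp [Equiv.swap_apply_self]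
  rw [h1]
  have h2 : ∀ k, H (Equiv.swap i j k) * u k ^ 2
      = H k * u k ^ 2 + (if k = i then (H j - H i) * u i ^ 2
          else if k = j then (H i - H j) * u j ^ 2 else 0) := by
    intro k
    rcases eq_or_ne k i with rfl | hki
    · simp [Equiv.swap_apply_left]; ring
    rcases eq_or_ne k j with rfl | hkj
    · simp [Equiv.swap_apply_right, hki]; ring
    · simp [Equiv.swap_apply_of_ne_of_ne hki hkj, hki, hkj]
  simp_rw [h2]
  rw [Finset.sum_add_distrib]
  have h3 : ∑ k, (if k = i then (H j - H i) * u i ^ 2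
      else if k = j then (H i - H j) * u j ^ 2 else 0)
      = (H j - H i) * u i ^ 2 + (H i - H j) * u j ^ 2 := by
    rw [← Finset.sum_subset (Finset.subset_univ ({i, j} : Finset (Fin q)))]
    · rw [Finset.sum_pair hij]
      simp [hij.symm]
    · intro x _ hx
      simp only [Finset.mem_insert, Finset.mem_singleton, not_or] at hx
      simp [hx.1, hx.2]
  rw [h3]; ring

private lemma sum_pos' {q : ℕ} (H : Fin q → ℝ) (hHpos : ∀ k, 0 < H k) (u : Fin q → ℝ)
    (hu : ∑ k, u k ^ 2 = 1) : 0 < ∑ k, H k * u k ^ 2 := by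
  have hex : ∃ k : Fin q, u k ^ 2 ≠ 0 := by
    by_contra h
    push_neg at h
    rw [Finset.sum_eq_zero (fun k _ => h k)] at hu
    norm_num at hu
  obtain ⟨k, hk⟩ := hex
  refine Finset.sum_pos' (fun m _ => mul_nonneg (hHpos m).le (sq_nonneg _)) ⟨k, Finset.mem_univ k, ?_⟩
  exact mul_pos (hHpos k) (lt_of_le_of_ne (sq_nonneg _) (Ne.symm hk))

theorem kendall_eigs_antitone
    {Ω : Type*} [MeasurableSpace Ω] (μ : Measure Ω) [IsProbabilityMeasure μ]
    {q : ℕ} (U : Ω → Fin q → ℝ) (hUmeas : Measurable U)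
    -- `U` is uniform on the unit sphere of ℝ^q :
    (hUsphere : ∀ᵐ ω ∂μ, ∑ k, U ω k ^ 2 = 1)
    (hUunif : ∀ O : Matrix.orthogonalGroup (Fin q) ℝ,
      ProbabilityTheory.IdentDistrib (fun ω => (O : Matrix (Fin q) (Fin q) ℝ).mulVec (U ω)) U μ μ)
    (H : Fin q → ℝ) (hHpos : ∀ k, 0 < H k) (hH : Antitone H) :
    Antitone (fun j : Fin q =>
      ∫ ω, (H j * U ω j ^ 2) / (∑ k, H k * U ω k ^ 2) ∂μ) := by
  intro i j hij
  rcases eq_or_lt_of_le hij with rfl | hlt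
  · exact le_refl _
  have hne : i ≠ j := ne_of_lt hlt
  set σ : Equiv.Perm (Fin q) := Equiv.swap i j with hσ
  -- the swap permutation matrix is orthogonal
  have hOmem : σ.permMatrix ℝ ∈ Matrix.orthogonalGroup (Fin q) ℝ := by
    rw [Matrix.mem_orthogonalGroup_iff]
    have h1 : star (σ.permMatrix ℝ) = σ.permMatrix ℝ := by
      rw [Matrix.star_eq_conjTranspose]
      ext a b
      simp [Matrix.conjTranspose_apply, PEquiv.toMatrix_apply, Equiv.toPEquiv_apply,
        Equiv.swap_apply_def]
      aesop
    rw [← Matrix.conjTranspose_eq_transpose_of_trivial, ← Matrix.star_eq_conjTranspose, h1, ← PEquiv.toMatrix_trans, ← Equiv.toPEquiv_trans]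
    simp [hσ]
  set O : Matrix.orthogonalGroup (Fin q) ℝ := ⟨σ.permMatrix ℝ, hOmem⟩ with hO
  have hmul : ∀ u : Fin q → ℝ, (σ.permMatrix ℝ).mulVec u = fun k => u (σ k) := by
    intro u
    ext k
    simp [Matrix.mulVec, dotProduct, PEquiv.toMatrix_apply, Equiv.toPEquiv_apply]
  -- the swapped process
  set V : Ω → Fin q → ℝ := fun ω k => U ω (σ k) with hV
  have hUV : (fun ω => (O : Matrix (Fin q) (Fin q) ℝ).mulVec (U ω)) = V := by
    funext ω
    exact hmul (U ω)
  have hVsphere : ∀ᵐ ω ∂μ, ∑ k, V ω k ^ 2 = 1 := by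
    filter_upwards [hUsphere] with ω hω
    calc ∑ k, V ω k ^ 2 = ∑ k, U ω (σ k) ^ 2 := rfl
      _ = ∑ k, U ω k ^ 2 := Equiv.sum_comp σ (fun k => U ω k ^ 2)
      _ = 1 := hω
  -- the ratio function
  set g : Fin q → (Fin q → ℝ) → ℝ := fun m u => H m * u m ^ 2 / ∑ k, H k * u k ^ 2 with hg
  have hgmeas : ∀ m, Measurable (g m) := by
    intro m
    exact ((measurable_const.mul ((measurable_pi_apply m).pow measurable_const)).div
      (Finset.measurable_sum _ (fun k _ =>
        measurable_const.mul ((measurable_pi_apply k).pow measurable_const))))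
  -- bounds and integrability for any sphere-valued measurable process
  have hbound : ∀ (m : Fin q) (u : Fin q → ℝ), (∑ k, u k ^ 2 = 1) →
      0 ≤ g m u ∧ g m u ≤ 1 := by
    intro m u hu
    have hS : 0 < ∑ k, H k * u k ^ 2 := sum_pos' H hHpos u hu
    constructor
    · exact div_nonneg (mul_nonneg (hHpos m).le (sq_nonneg _)) hS.le
    · rw [div_le_one hS]
      exact Finset.single_le_sum (f := fun k => H k * u k ^ 2)
        (fun k _ => mul_nonneg (hHpos k).le (sq_nonneg _)) (Finset.mem_univ m)
  have hint : ∀ (m : Fin q) (W : Ω → Fin q → ℝ), Measurable W →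
      (∀ᵐ ω ∂μ, ∑ k, W ω k ^ 2 = 1) → Integrable (fun ω => g m (W ω)) μ := by
    intro m W hWmeas hWsphere
    refine Integrable.mono' (integrable_const (1 : ℝ))
      ((hgmeas m).comp hWmeas).aestronglyMeasurable ?_
    filter_upwards [hWsphere] with ω hω
    obtain ⟨h0, h1⟩ := hbound m (W ω) hω
    rw [Real.norm_eq_abs, abs_of_nonneg h0]
    exact h1
  have hVmeas : Measurable V := by
    exact measurable_pi_lambda _ (fun k => (measurable_pi_apply (σ k)).comp hUmeas)
  -- identical distribution gives equal integrals
  have heq : ∀ m : Fin q, ∫ ω, g m (V ω) ∂μ = ∫ ω, g m (U ω) ∂μ := by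
    intro m
    have h := ((hUunif O).comp (hgmeas m)).integral_eq
    simp only [Function.comp] at h
    calc ∫ ω, g m (V ω) ∂μ
        = ∫ ω, g m ((O : Matrix (Fin q) (Fin q) ℝ).mulVec (U ω)) ∂μ := by
          congr 1; funext ω; rw [congrFun hUV ω]
      _ = ∫ ω, g m (U ω) ∂μ := h
  -- pointwise a.e. inequality
  have hpt : ∀ᵐ ω ∂μ, g j (U ω) + g j (V ω) ≤ g i (U ω) + g i (V ω) := by
    filter_upwards [hUsphere, hVsphere] with ω hωU hωV
    have hS : 0 < ∑ k, H k * U ω k ^ 2 := sum_pos' H hHpos _ hωU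
    have hS' : 0 < ∑ k, H k * V ω k ^ 2 := sum_pos' H hHpos _ hωV
    have hSS : ∑ k, H k * V ω k ^ 2
        = (∑ k, H k * U ω k ^ 2) + (H i - H j) * (U ω j ^ 2 - U ω i ^ 2) :=
      sum_swap_eq' H hne (U ω)
    have hSge : H i * U ω i ^ 2 + H j * U ω j ^ 2 ≤ ∑ k, H k * U ω k ^ 2 := by
      have hsub := Finset.sum_le_sum_of_subset_of_nonneg
        (Finset.subset_univ ({i, j} : Finset (Fin q)))
        (fun k _ _ => mul_nonneg (hHpos k).le (sq_nonneg (U ω k)))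
      rwa [Finset.sum_pair hne] at hsub
    have hVi : V ω i = U ω j := by simp [hV, hσ, Equiv.swap_apply_left]
    have hVj : V ω j = U ω i := by simp [hV, hσ, Equiv.swap_apply_right]
    have key := key_frac' (H i) (H j) (U ω i ^ 2) (U ω j ^ 2)
      (∑ k, H k * U ω k ^ 2) (∑ k, H k * V ω k ^ 2)
      (hH hij) (hHpos j).le (sq_nonneg _) (sq_nonneg _) hS hS' hSS hSge
    calc g j (U ω) + g j (V ω)
        = H j * U ω j ^ 2 / (∑ k, H k * U ω k ^ 2)
          + H j * U ω i ^ 2 / (∑ k, H k * V ω k ^ 2) := by rw [hg]; simp [hVj]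
      _ ≤ H i * U ω i ^ 2 / (∑ k, H k * U ω k ^ 2)
          + H i * U ω j ^ 2 / (∑ k, H k * V ω k ^ 2) := key
      _ = g i (U ω) + g i (V ω) := by rw [hg]; simp [hVi]
  -- integrate
  have hIU := hint i U hUmeas hUsphere
  have hIV := hint i V hVmeas hVsphere
  have hJU := hint j U hUmeas hUsphere
  have hJV := hint j V hVmeas hVsphere
  have hmono : ∫ ω, (g j (U ω) + g j (V ω)) ∂μ ≤ ∫ ω, (g i (U ω) + g i (V ω)) ∂μ :=
    integral_mono_ae (hJU.add hJV) (hIU.add hIV) hpt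
  rw [integral_add hJU hJV, integral_add hIU hIV, heq i, heq j] at hmono
  show ∫ ω, (H j * U ω j ^ 2) / (∑ k, H k * U ω k ^ 2) ∂μ
      ≤ ∫ ω, (H i * U ω i ^ 2) / (∑ k, H k * U ω k ^ 2) ∂μ
  linarith
end

section
/- Let U = (U₁,…,U_q) be uniform on the unit sphere of ℝ^q, and let H₁₁ ≥ ⋯ ≥ H_qq > 0. Then for any j ≤ r ≤ q, E[H_jj U_j²/(Σ_{k=1}^q H_kk U_k²)] ≤ (H₁₁/H_rr) · (1/r). -/
open MeasureTheory Finset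

lemma permMatrix_mulVec {q : ℕ} (σ : Equiv.Perm (Fin q)) (v : Fin q → ℝ) (i : Fin q) :
    (σ.permMatrix ℝ).mulVec v i = v (σ i) := by
  simp [Matrix.mulVec, dotProduct, Equiv.Perm.permMatrix, PEquiv.toMatrix_apply,
    Equiv.toPEquiv_apply]

lemma permMatrix_mem_orthogonal {q : ℕ} (σ : Equiv.Perm (Fin q)) :
    (σ.permMatrix ℝ) ∈ Matrix.orthogonalGroup (Fin q) ℝ := by
  rw [Matrix.mem_orthogonalGroup_iff]
  ext i j
  simp [Matrix.mul_apply, Equiv.Perm.permMatrix, PEquiv.toMatrix_apply, Equiv.toPEquiv_apply,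
    Matrix.one_apply, Matrix.star_eq_conjTranspose, Matrix.conjTranspose_apply,
    eq_comm, EmbeddingLike.apply_eq_iff_eq, Equiv.eq_symm_apply]

theorem kendall_eig_upper_bound
    {Ω : Type*} [MeasurableSpace Ω] (μ : Measure Ω) [IsProbabilityMeasure μ]
    {q : ℕ} [NeZero q] (U : Ω → Fin q → ℝ) (hUmeas : Measurable U)
    -- `U` is uniform on the unit sphere of ℝ^q :
    (hUsphere : ∀ᵐ ω ∂μ, ∑ k, U ω k ^ 2 = 1)
    (hUunif : ∀ O : Matrix.orthogonalGroup (Fin q) ℝ,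
      ProbabilityTheory.IdentDistrib (fun ω => (O : Matrix (Fin q) (Fin q) ℝ).mulVec (U ω)) U μ μ)
    (H : Fin q → ℝ) (hHpos : ∀ k, 0 < H k) (hH : Antitone H)
    (j r : Fin q) (hjr : j ≤ r) :
    ∫ ω, (H j * U ω j ^ 2) / (∑ k, H k * U ω k ^ 2) ∂μ
      ≤ (H 0 / H r) * (1 / ((r : ℕ) + 1)) := by
  classical
  -- the function v ↦ v i ^ 2 / ∑_{k ≤ r} v k ^ 2
  set g : Fin q → (Fin q → ℝ) → ℝ :=
    fun i v => v i ^ 2 / ∑ k ∈ Finset.Iic r, v k ^ 2 with hg_def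
  have hgmeas : ∀ i, Measurable (g i) := by
    intro i
    exact ((measurable_pi_apply i).pow_const 2).div
      (Finset.measurable_sum _ fun k _ => (measurable_pi_apply k).pow_const 2)
  set f : Fin q → Ω → ℝ := fun i ω => g i (U ω) with hf_def
  have hfmeas : ∀ i, Measurable (f i) := fun i => (hgmeas i).comp hUmeas
  have hS_nonneg : ∀ v : Fin q → ℝ, (0:ℝ) ≤ ∑ k ∈ Finset.Iic r, v k ^ 2 :=
    fun v => Finset.sum_nonneg fun k _ => sq_nonneg _
  have hg_nonneg : ∀ i v, 0 ≤ g i v := fun i v => div_nonneg (sq_nonneg _) (hS_nonneg v)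
  have hg_le_one : ∀ i ∈ Finset.Iic r, ∀ v : Fin q → ℝ, g i v ≤ 1 := by
    intro i hi v
    rcases eq_or_lt_of_le (hS_nonneg v) with h | h
    · simp [hg_def, ← h]
    · exact div_le_one_of_le₀ (Finset.single_le_sum (fun k _ => sq_nonneg (v k)) hi) h.le
  have hf_int : ∀ i ∈ Finset.Iic r, Integrable (f i) μ := by
    intro i hi
    refine (integrable_const (1:ℝ)).mono' (hfmeas i).aestronglyMeasurable ?_
    filter_upwards with ω
    rw [Real.norm_eq_abs, abs_of_nonneg (hg_nonneg i _)]
    exact hg_le_one i hi _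
  -- all integrals over i ∈ Iic r are equal to that of j
  have hjmem : j ∈ Finset.Iic r := Finset.mem_Iic.2 hjr
  have hswap : ∀ i ∈ Finset.Iic r, ∫ ω, f i ω ∂μ = ∫ ω, f j ω ∂μ := by
    intro i hi
    set σ := Equiv.swap i j with hσ
    have hσIic : ∀ k, σ k ∈ Finset.Iic r ↔ k ∈ Finset.Iic r := by
      intro k
      rcases eq_or_ne k i with rfl | hki
      · simp [hσ, Equiv.swap_apply_left, hjmem, hi]
      rcases eq_or_ne k j with rfl | hkj
      · simp [hσ, Equiv.swap_apply_right, hjmem, hi]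
      · rw [hσ, Equiv.swap_apply_of_ne_of_ne hki hkj]
    have hid := (hUunif ⟨σ.permMatrix ℝ, permMatrix_mem_orthogonal σ⟩).comp (hgmeas j)
    have := hid.integral_eq
    convert this using 2 with ω
    funext ω
    show g i (U ω) = g j ((σ.permMatrix ℝ).mulVec (U ω))
    have h1 : ((σ.permMatrix ℝ).mulVec (U ω)) j = U ω i := by
      rw [permMatrix_mulVec]; simp [hσ, Equiv.swap_apply_right]
    have h2 : ∑ k ∈ Finset.Iic r, ((σ.permMatrix ℝ).mulVec (U ω)) k ^ 2
        = ∑ k ∈ Finset.Iic r, U ω k ^ 2 := by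
      simp only [permMatrix_mulVec]
      exact Finset.sum_nbij' (fun k => σ k) (fun k => σ.symm k)
        (fun k hk => (hσIic k).2 hk)
        (fun k hk => by
          have := (hσIic (σ.symm k)).1; simp only [Equiv.apply_symm_apply] at this
          exact this hk)
        (fun k _ => σ.symm_apply_apply k) (fun k _ => σ.apply_symm_apply k)
        (fun k _ => rfl)
    simp [hg_def, h1, h2]
    rfl
  -- sum of the f's is at most 1
  have hsum_le : ∀ ω, ∑ i ∈ Finset.Iic r, f i ω ≤ 1 := by
    intro ω
    rcases eq_or_lt_of_le (hS_nonneg (U ω)) with h | h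
    · simp only [hf_def, hg_def, ← h, div_zero, Finset.sum_const_zero]; norm_num
    · have : ∑ i ∈ Finset.Iic r, f i ω
          = (∑ i ∈ Finset.Iic r, U ω i ^ 2) / ∑ k ∈ Finset.Iic r, U ω k ^ 2 := by
        rw [Finset.sum_div]
      rw [this, div_self h.ne']
  have hsum_int : Integrable (fun ω => ∑ i ∈ Finset.Iic r, f i ω) μ :=
    integrable_finset_sum _ hf_int
  have hcard : ((Finset.Iic r).card : ℝ) = (r : ℕ) + 1 := by
    rw [Fin.card_Iic]; push_cast; ring
  have hkey : ∫ ω, f j ω ∂μ ≤ 1 / ((r : ℕ) + 1) := by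
    have h1 : ∑ i ∈ Finset.Iic r, ∫ ω, f i ω ∂μ ≤ 1 := by
      rw [← integral_finset_sum _ hf_int]
      calc ∫ ω, ∑ i ∈ Finset.Iic r, f i ω ∂μ
          ≤ ∫ _, (1:ℝ) ∂μ := integral_mono hsum_int (integrable_const 1)
            (fun ω => hsum_le ω)
        _ = 1 := by simp
    have h2 : ∑ i ∈ Finset.Iic r, ∫ ω, f i ω ∂μ
        = ((r : ℕ) + 1) * ∫ ω, f j ω ∂μ := by
      rw [Finset.sum_congr rfl hswap, Finset.sum_const, nsmul_eq_mul, hcard]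
    rw [h2] at h1
    have hr1 : (0:ℝ) < (r : ℕ) + 1 := by positivity
    rw [le_div_iff₀ hr1]
    linarith
  -- pointwise bound
  have hpt : ∀ ω, (H j * U ω j ^ 2) / (∑ k, H k * U ω k ^ 2)
      ≤ (H 0 / H r) * f j ω := by
    intro ω
    set x : Fin q → ℝ := fun k => U ω k ^ 2 with hx
    have hx0 : ∀ k, 0 ≤ x k := fun k => sq_nonneg _
    set S := ∑ k ∈ Finset.Iic r, x k with hSdef
    have hDS : H r * S ≤ ∑ k, H k * x k := by
      calc H r * S = ∑ k ∈ Finset.Iic r, H r * x k := by rw [Finset.mul_sum]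
        _ ≤ ∑ k ∈ Finset.Iic r, H k * x k :=
            Finset.sum_le_sum fun k hk =>
              mul_le_mul_of_nonneg_right (hH (Finset.mem_Iic.1 hk)) (hx0 k)
        _ ≤ ∑ k, H k * x k :=
            Finset.sum_le_sum_of_subset_of_nonneg (Finset.subset_univ _)
              (fun k _ _ => mul_nonneg (hHpos k).le (hx0 k))
    rcases eq_or_lt_of_le (hS_nonneg (U ω)) with h | h
    · have hxj : x j = 0 := by
        have := (Finset.sum_eq_zero_iff_of_nonneg (fun k _ => hx0 k)).1 h.symm j hjmem
        exact this
      simp [hf_def, hg_def, hx] at hxj ⊢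
      simp [hxj]
    · have hS0 : (0:ℝ) < S := h
      have hD0 : (0:ℝ) < ∑ k, H k * x k := lt_of_lt_of_le (mul_pos (hHpos r) h) hDS
      have hfj : f j ω = x j / S := rfl
      rw [hfj]
      have : H j * x j / (∑ k, H k * x k) ≤ (H 0 * x j) / (H r * S) := by
        apply div_le_div₀ (mul_nonneg (hHpos 0).le (hx0 j))
          (mul_le_mul_of_nonneg_right (hH (Fin.zero_le j)) (hx0 j))
          (mul_pos (hHpos r) hS0) hDS
      refine this.trans (le_of_eq ?_)
      rw [div_mul_div_comm]
  -- conclude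
  have hlhs_int : Integrable
      (fun ω => (H j * U ω j ^ 2) / (∑ k, H k * U ω k ^ 2)) μ := by
    have hm : Measurable (fun ω => (H j * U ω j ^ 2) / (∑ k, H k * U ω k ^ 2)) := by
      exact (measurable_const.mul ((measurable_pi_apply j).comp hUmeas |>.pow_const 2)).div
        (Finset.measurable_sum _ fun k _ =>
          measurable_const.mul ((measurable_pi_apply k).comp hUmeas |>.pow_const 2))
    refine (integrable_const (H 0 / H r)).mono' hm.aestronglyMeasurable ?_
    filter_upwards with ω
    rw [Real.norm_eq_abs, abs_of_nonneg (div_nonneg (mul_nonneg (hHpos j).le (sq_nonneg _))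
      (Finset.sum_nonneg fun k _ => mul_nonneg (hHpos k).le (sq_nonneg _)))]
    refine (hpt ω).trans ?_
    have : f j ω ≤ 1 := hg_le_one j hjmem _
    nlinarith [div_nonneg (hHpos 0).le (hHpos r).le]
  calc ∫ ω, (H j * U ω j ^ 2) / (∑ k, H k * U ω k ^ 2) ∂μ
      ≤ ∫ ω, (H 0 / H r) * f j ω ∂μ :=
        integral_mono hlhs_int ((hf_int j hjmem).const_mul _) hpt
    _ = (H 0 / H r) * ∫ ω, f j ω ∂μ := integral_const_mul _ _
    _ ≤ (H 0 / H r) * (1 / ((r : ℕ) + 1)) :=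
        mul_le_mul_of_nonneg_left hkey (div_nonneg (hHpos 0).le (hHpos r).le)
end

section
/- Let Σ_y = ΛΛᵀ + Σ_u where Λ is N × r with ‖ΛᵀΛ/N − Σ_Λ‖₂ → 0 for a positive definite Σ_Λ with eigenvalues in [C₂, C₁], and Σ_u is N × N symmetric with eigenvalues in [C₂, C₁]. Then for j ≤ r, N(C₂' + o(1)) ≤ λ_j(Σ_y) ≤ N(C₁' + o(1)) for constants depending on C₁, C₂, while for j > r, λ_j(Σ_y) ≤ C₁. -/
open Matrix Filter
open scoped Matrix.Norms.L2Operator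

/-- The `j`-th largest entry of `v` (0-indexed). -/
noncomputable def nthLargest {N : ℕ} (v : Fin N → ℝ) (j : Fin N) : ℝ :=
  ((List.ofFn v).mergeSort (fun a b => b ≤ a)).getD j 0

lemma nthLargest_eq_perm {n : ℕ} (v : Fin n → ℝ) :
    ∃ σ : Equiv.Perm (Fin n), (∀ j, nthLargest v j = v (σ j)) ∧
      ∀ i j : Fin n, i ≤ j → v (σ j) ≤ v (σ i) := by
  classical
  set σ : Equiv.Perm (Fin n) := (Fin.revPerm).trans (Tuple.sort v) with hσ
  have hmono : ∀ i j : Fin n, i ≤ j → v (σ j) ≤ v (σ i) := by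
    intro i j hij
    have : j.rev ≤ i.rev := Fin.rev_le_rev.mpr hij
    exact Tuple.monotone_sort v this
  have hanti : IsAntisymm ℝ (fun a b => b ≤ a) := ⟨fun a b h1 h2 => le_antisymm h2 h1⟩
  have key : (List.ofFn v).mergeSort (fun a b => b ≤ a) = List.ofFn (v ∘ σ) := by
    have hperm : ((List.ofFn v).mergeSort (fun a b => b ≤ a)).Perm (List.ofFn (v ∘ σ)) :=
      (List.mergeSort_perm _ _).trans (Equiv.Perm.ofFn_comp_perm σ v).symm
    have hs1 : List.Pairwise (fun a b : ℝ => b ≤ a) ((List.ofFn v).mergeSort (fun a b => b ≤ a)) := by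
      have := List.pairwise_mergeSort (le := fun a b : ℝ => decide (b ≤ a))
        (fun a b c h1 h2 => by simp at h1 h2 ⊢; exact h2.trans h1)
        (fun a b => by simpa using le_total b a) (List.ofFn v)
      refine this.imp ?_
      intro a b h; simpa using h
    have hs2 : List.Pairwise (fun a b : ℝ => b ≤ a) (List.ofFn (v ∘ σ)) := by
      rw [List.pairwise_ofFn]
      intro i j hij
      exact hmono i j hij.le
    exact List.Perm.eq_of_pairwise (fun a b _ _ h1 h2 => le_antisymm h2 h1) hs1 hs2 hperm
  refine ⟨σ, ?_, hmono⟩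
  intro j
  rw [nthLargest, key]
  rw [List.getD_eq_getElem _ _ (by simp [j.isLt])]
  simp

variable {n : ℕ} {A : Matrix (Fin n) (Fin n) ℝ}

lemma star_U_mul (hA : A.IsHermitian) :
    star (hA.eigenvectorUnitary : Matrix (Fin n) (Fin n) ℝ) * A
      = diagonal hA.eigenvalues * star (hA.eigenvectorUnitary : Matrix (Fin n) (Fin n) ℝ) := by
  have h := hA.conjStarAlgAut_star_eigenvectorUnitary
  simp only [Unitary.conjStarAlgAut_apply, Unitary.coe_star, star_star] at h
  have hU : (hA.eigenvectorUnitary : Matrix (Fin n) (Fin n) ℝ) *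
      star (hA.eigenvectorUnitary : Matrix (Fin n) (Fin n) ℝ) = 1 :=
    (Matrix.mem_unitaryGroup_iff).mp hA.eigenvectorUnitary.2
  have hd : (RCLike.ofReal ∘ hA.eigenvalues : Fin n → ℝ) = hA.eigenvalues := by
    funext i; simp
  calc star (hA.eigenvectorUnitary : Matrix (Fin n) (Fin n) ℝ) * A
      = star (hA.eigenvectorUnitary : Matrix (Fin n) (Fin n) ℝ) * A *
        ((hA.eigenvectorUnitary : Matrix (Fin n) (Fin n) ℝ) *
          star (hA.eigenvectorUnitary : Matrix (Fin n) (Fin n) ℝ)) := by rw [hU, mul_one]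
    _ = diagonal hA.eigenvalues * star (hA.eigenvectorUnitary : Matrix (Fin n) (Fin n) ℝ) := by
        rw [← Matrix.mul_assoc, h, hd]

lemma dp_star_mulVec (U : Matrix (Fin n) (Fin n) ℝ) (x w : Fin n → ℝ) :
    (star U *ᵥ x) ⬝ᵥ w = x ⬝ᵥ (U *ᵥ w) := by
  rw [Matrix.star_eq_conjTranspose, conjTranspose_eq_transpose_of_trivial,
    Matrix.mulVec_transpose, Matrix.dotProduct_mulVec]

lemma dp_self_eq (hA : A.IsHermitian) (x : Fin n → ℝ) :
    x ⬝ᵥ x = ∑ i, ((star (hA.eigenvectorUnitary : Matrix (Fin n) (Fin n) ℝ) *ᵥ x) i)^2 := by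
  set U : Matrix (Fin n) (Fin n) ℝ := (hA.eigenvectorUnitary : Matrix (Fin n) (Fin n) ℝ) with hU'
  have hU : U * star U = 1 := (Matrix.mem_unitaryGroup_iff).mp hA.eigenvectorUnitary.2
  have h1 : (star U *ᵥ x) ⬝ᵥ (star U *ᵥ x) = x ⬝ᵥ x := by
    rw [dp_star_mulVec, Matrix.mulVec_mulVec, hU, Matrix.one_mulVec]
  rw [← h1]
  simp [dotProduct, pow_two]

lemma quad_eq (hA : A.IsHermitian) (x : Fin n → ℝ) :
    x ⬝ᵥ (A *ᵥ x) = ∑ i, hA.eigenvalues i *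
      ((star (hA.eigenvectorUnitary : Matrix (Fin n) (Fin n) ℝ) *ᵥ x) i)^2 := by
  set U : Matrix (Fin n) (Fin n) ℝ := (hA.eigenvectorUnitary : Matrix (Fin n) (Fin n) ℝ) with hU'
  have hU : U * star U = 1 := (Matrix.mem_unitaryGroup_iff).mp hA.eigenvectorUnitary.2
  have hA' : A = U * (diagonal hA.eigenvalues * star U) := by
    rw [← star_U_mul hA, ← Matrix.mul_assoc, hU, Matrix.one_mul]
  have hAx : A *ᵥ x = U *ᵥ ((diagonal hA.eigenvalues * star U) *ᵥ x) := by
    conv_lhs => rw [hA']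
    rw [← Matrix.mulVec_mulVec]
  calc x ⬝ᵥ (A *ᵥ x) = x ⬝ᵥ (U *ᵥ ((diagonal hA.eigenvalues * star U) *ᵥ x)) := by
        rw [hAx]
    _ = (star U *ᵥ x) ⬝ᵥ (diagonal hA.eigenvalues *ᵥ (star U *ᵥ x)) := by
        rw [dp_star_mulVec, ← Matrix.mulVec_mulVec]
    _ = ∑ i, hA.eigenvalues i * ((star U *ᵥ x) i)^2 := by
        simp [dotProduct, Matrix.mulVec_diagonal, pow_two]
        exact Finset.sum_congr rfl fun i _ => by ring

lemma dp_self_nonneg (x : Fin n → ℝ) : 0 ≤ x ⬝ᵥ x :=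
  Finset.sum_nonneg fun i _ => mul_self_nonneg _

lemma dp_self_pos {x : Fin n → ℝ} (hx : x ≠ 0) : 0 < x ⬝ᵥ x :=
  lt_of_le_of_ne (dp_self_nonneg x) (fun h => hx (dotProduct_self_eq_zero.mp h.symm))

lemma quad_le_of_eig (hA : A.IsHermitian) {c : ℝ} (h : ∀ i, hA.eigenvalues i ≤ c)
    (x : Fin n → ℝ) : x ⬝ᵥ (A *ᵥ x) ≤ c * (x ⬝ᵥ x) := by
  rw [quad_eq hA, dp_self_eq hA, Finset.mul_sum]
  exact Finset.sum_le_sum fun i _ => mul_le_mul_of_nonneg_right (h i) (sq_nonneg _)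

lemma quad_ge_of_eig (hA : A.IsHermitian) {c : ℝ} (h : ∀ i, c ≤ hA.eigenvalues i)
    (x : Fin n → ℝ) : c * (x ⬝ᵥ x) ≤ x ⬝ᵥ (A *ᵥ x) := by
  rw [quad_eq hA, dp_self_eq hA, Finset.mul_sum]
  exact Finset.sum_le_sum fun i _ => mul_le_mul_of_nonneg_right (h i) (sq_nonneg _)

lemma eig_ge_of_quad (hA : A.IsHermitian) {c : ℝ}
    (h : ∀ x, c * (x ⬝ᵥ x) ≤ x ⬝ᵥ (A *ᵥ x)) (i : Fin n) : c ≤ hA.eigenvalues i := by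
  set v : Fin n → ℝ := ⇑(hA.eigenvectorBasis i) with hv
  have hv0 : v ≠ 0 := by
    intro h0
    exact hA.eigenvectorBasis.orthonormal.ne_zero i (by ext j; exact congrFun h0 j)
  have hAv : A *ᵥ v = hA.eigenvalues i • v := hA.mulVec_eigenvectorBasis i
  have := h v
  rw [hAv, dotProduct_smul, smul_eq_mul] at this
  have hpos := dp_self_pos hv0
  exact le_of_mul_le_mul_right this hpos

-- b * (y ⬝ᵥ A y) ≤ (A y) ⬝ᵥ (A y) when eigenvalues ≥ b ≥ 0
lemma quad_sq_ge (hA : A.IsHermitian) {b : ℝ} (hb : 0 ≤ b)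
    (h : ∀ i, b ≤ hA.eigenvalues i) (y : Fin n → ℝ) :
    b * (y ⬝ᵥ (A *ᵥ y)) ≤ (A *ᵥ y) ⬝ᵥ (A *ᵥ y) := by
  set U : Matrix (Fin n) (Fin n) ℝ := (hA.eigenvectorUnitary : Matrix (Fin n) (Fin n) ℝ) with hUdef
  have hkey : star U *ᵥ (A *ᵥ y) = diagonal hA.eigenvalues *ᵥ (star U *ᵥ y) := by
    rw [Matrix.mulVec_mulVec, Matrix.mulVec_mulVec, star_U_mul hA]
  rw [dp_self_eq hA (A *ᵥ y), quad_eq hA y, Finset.mul_sum]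
  refine Finset.sum_le_sum fun i _ => ?_
  rw [hkey]
  simp only [Matrix.mulVec_diagonal]
  have h1 : b ≤ hA.eigenvalues i := h i
  show b * (hA.eigenvalues i * ((star U *ᵥ y) i)^2) ≤ (hA.eigenvalues i * (star U *ᵥ y) i)^2
  calc b * (hA.eigenvalues i * ((star U *ᵥ y) i)^2)
      ≤ hA.eigenvalues i * (hA.eigenvalues i * ((star U *ᵥ y) i)^2) :=
        mul_le_mul_of_nonneg_right h1 (mul_nonneg (hb.trans h1) (sq_nonneg _))
    _ = (hA.eigenvalues i * (star U *ᵥ y) i)^2 := by ring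

lemma finrank_pi_real (ι : Type*) [Fintype ι] :
    Module.finrank ℝ (ι → ℝ) = Fintype.card ι := by simp

lemma nthLargest_le_of_subspace (hA : A.IsHermitian) (j : Fin n) {c : ℝ}
    (W : Submodule ℝ (Fin n → ℝ)) (hdim : n ≤ Module.finrank ℝ W + (j:ℕ))
    (hW : ∀ x ∈ W, x ⬝ᵥ (A *ᵥ x) ≤ c * (x ⬝ᵥ x)) :
    nthLargest hA.eigenvalues j ≤ c := by
  classical
  obtain ⟨σ, hσ, hmono⟩ := nthLargest_eq_perm hA.eigenvalues
  set U : Matrix (Fin n) (Fin n) ℝ := (hA.eigenvectorUnitary : Matrix (Fin n) (Fin n) ℝ) with hUdef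
  set Φ : (Fin n → ℝ) →ₗ[ℝ] (Set.Ioi j → ℝ) :=
    LinearMap.pi (fun k => (LinearMap.proj (σ k.1)).comp (Matrix.mulVecLin (star U))) with hΦ
  have h3 : Module.finrank ℝ (Fin n → ℝ) = n := by simp
  have hker : (j:ℕ) + 1 ≤ Module.finrank ℝ (LinearMap.ker Φ) := by
    have h1 := LinearMap.finrank_range_add_finrank_ker Φ
    have h2 : Module.finrank ℝ (LinearMap.range Φ) ≤ n - 1 - (j:ℕ) := by
      have hle := Submodule.finrank_le (LinearMap.range Φ)
      rwa [finrank_pi_real, Fintype.card_Ioi, Fin.card_Ioi] at hle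
    have hj := j.isLt
    omega
  have hint : ∃ x : Fin n → ℝ, x ≠ 0 ∧ x ∈ LinearMap.ker Φ ⊓ W := by
    by_contra hcon
    push_neg at hcon
    have hdisj : Disjoint (LinearMap.ker Φ) W := by
      rw [Submodule.disjoint_def]
      intro x hx1 hx2
      by_contra hx0
      exact (hcon x hx0) (Submodule.mem_inf.mpr ⟨hx1, hx2⟩)
    have hfr := Submodule.finrank_add_finrank_le_of_disjoint hdisj
    rw [h3] at hfr
    omega
  obtain ⟨x, hx0, hx⟩ := hint
  obtain ⟨hxV, hxW⟩ := Submodule.mem_inf.mp hx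
  set y : Fin n → ℝ := star U *ᵥ x with hy
  have hy0 : ∀ k : Fin n, j < k → y (σ k) = 0 := by
    intro k hk
    have := LinearMap.mem_ker.mp hxV
    have h4 := congrFun this ⟨k, hk⟩
    simpa [hΦ, Matrix.mulVecLin_apply] using h4
  have hquad : x ⬝ᵥ (A *ᵥ x) = ∑ k, hA.eigenvalues (σ k) * (y (σ k))^2 := by
    rw [quad_eq hA x, ← Equiv.sum_comp σ (fun i => hA.eigenvalues i * (y i)^2)]
  have hnorm : x ⬝ᵥ x = ∑ k, (y (σ k))^2 := by
    rw [dp_self_eq hA x, ← Equiv.sum_comp σ (fun i => (y i)^2)]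
  have hlow : nthLargest hA.eigenvalues j * (x ⬝ᵥ x) ≤ x ⬝ᵥ (A *ᵥ x) := by
    rw [hquad, hnorm, Finset.mul_sum]
    refine Finset.sum_le_sum fun k _ => ?_
    rcases le_or_gt k j with hkj | hkj
    · have : hA.eigenvalues (σ j) ≤ hA.eigenvalues (σ k) := hmono k j hkj
      rw [hσ j]
      exact mul_le_mul_of_nonneg_right this (sq_nonneg _)
    · rw [hy0 k hkj]
      simp
  have hpos := dp_self_pos hx0
  have := (hW x hxW)
  have hfin : nthLargest hA.eigenvalues j * (x ⬝ᵥ x) ≤ c * (x ⬝ᵥ x) := hlow.trans this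
  exact le_of_mul_le_mul_right hfin hpos

lemma nthLargest_ge_of_subspace (hA : A.IsHermitian) (j : Fin n) {c : ℝ}
    (V : Submodule ℝ (Fin n → ℝ)) (hdim : (j:ℕ) + 1 ≤ Module.finrank ℝ V)
    (hV : ∀ x ∈ V, c * (x ⬝ᵥ x) ≤ x ⬝ᵥ (A *ᵥ x)) :
    c ≤ nthLargest hA.eigenvalues j := by
  classical
  obtain ⟨σ, hσ, hmono⟩ := nthLargest_eq_perm hA.eigenvalues
  set U : Matrix (Fin n) (Fin n) ℝ := (hA.eigenvectorUnitary : Matrix (Fin n) (Fin n) ℝ) with hUdef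
  set Φ : (Fin n → ℝ) →ₗ[ℝ] (Set.Iio j → ℝ) :=
    LinearMap.pi (fun k => (LinearMap.proj (σ k.1)).comp (Matrix.mulVecLin (star U))) with hΦ
  have h3 : Module.finrank ℝ (Fin n → ℝ) = n := by simp
  have hker : n - (j:ℕ) ≤ Module.finrank ℝ (LinearMap.ker Φ) := by
    have h1 := LinearMap.finrank_range_add_finrank_ker Φ
    have h2 : Module.finrank ℝ (LinearMap.range Φ) ≤ (j:ℕ) := by
      have hle := Submodule.finrank_le (LinearMap.range Φ)
      rwa [finrank_pi_real, Fintype.card_Iio, Fin.card_Iio] at hle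
    omega
  have hint : ∃ x : Fin n → ℝ, x ≠ 0 ∧ x ∈ LinearMap.ker Φ ⊓ V := by
    by_contra hcon
    push_neg at hcon
    have hdisj : Disjoint (LinearMap.ker Φ) V := by
      rw [Submodule.disjoint_def]
      intro x hx1 hx2
      by_contra hx0
      exact (hcon x hx0) (Submodule.mem_inf.mpr ⟨hx1, hx2⟩)
    have hfr := Submodule.finrank_add_finrank_le_of_disjoint hdisj
    rw [h3] at hfr
    have hj := j.isLt
    omega
  obtain ⟨x, hx0, hx⟩ := hint
  obtain ⟨hxV, hxW⟩ := Submodule.mem_inf.mp hx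
  set y : Fin n → ℝ := star U *ᵥ x with hy
  have hy0 : ∀ k : Fin n, k < j → y (σ k) = 0 := by
    intro k hk
    have := LinearMap.mem_ker.mp hxV
    have h4 := congrFun this ⟨k, hk⟩
    simpa [hΦ, Matrix.mulVecLin_apply] using h4
  have hquad : x ⬝ᵥ (A *ᵥ x) = ∑ k, hA.eigenvalues (σ k) * (y (σ k))^2 := by
    rw [quad_eq hA x, ← Equiv.sum_comp σ (fun i => hA.eigenvalues i * (y i)^2)]
  have hnorm : x ⬝ᵥ x = ∑ k, (y (σ k))^2 := by
    rw [dp_self_eq hA x, ← Equiv.sum_comp σ (fun i => (y i)^2)]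
  have hup : x ⬝ᵥ (A *ᵥ x) ≤ nthLargest hA.eigenvalues j * (x ⬝ᵥ x) := by
    rw [hquad, hnorm, Finset.mul_sum]
    refine Finset.sum_le_sum fun k _ => ?_
    rcases lt_or_ge k j with hkj | hkj
    · rw [hy0 k hkj]
      simp
    · have : hA.eigenvalues (σ k) ≤ hA.eigenvalues (σ j) := hmono j k hkj
      rw [hσ j]
      exact mul_le_mul_of_nonneg_right this (sq_nonneg _)
  have hpos := dp_self_pos hx0
  have hfin : c * (x ⬝ᵥ x) ≤ nthLargest hA.eigenvalues j * (x ⬝ᵥ x) := (hV x hxW).trans hup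
  exact le_of_mul_le_mul_right hfin hpos

lemma dp_sq_le {m : ℕ} (a b : Fin m → ℝ) : (a ⬝ᵥ b)^2 ≤ (a ⬝ᵥ a) * (b ⬝ᵥ b) := by
  simpa [dotProduct, pow_two] using Finset.sum_mul_sq_le_sq_mul_sq Finset.univ a b

lemma dp_eq_norm_sq {m : ℕ} (w : Fin m → ℝ) :
    w ⬝ᵥ w = ‖(EuclideanSpace.equiv (Fin m) ℝ).symm w‖^2 := by
  rw [EuclideanSpace.norm_eq, Real.sq_sqrt (Finset.sum_nonneg fun i _ => sq_nonneg _)]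
  simp [dotProduct, pow_two]

lemma quad_abs_le {m : ℕ} (E : Matrix (Fin m) (Fin m) ℝ) (z : Fin m → ℝ) :
    |z ⬝ᵥ (E *ᵥ z)| ≤ ‖E‖ * (z ⬝ᵥ z) := by
  have h1 : (E *ᵥ z) ⬝ᵥ (E *ᵥ z) ≤ ‖E‖^2 * (z ⬝ᵥ z) := by
    have h2 := Matrix.l2_opNorm_mulVec E ((EuclideanSpace.equiv (Fin m) ℝ).symm z)
    have h3 : ‖(EuclideanSpace.equiv (Fin m) ℝ).symm (E *ᵥ z)‖ ≤
        ‖E‖ * ‖(EuclideanSpace.equiv (Fin m) ℝ).symm z‖ := h2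
    rw [dp_eq_norm_sq (E *ᵥ z), dp_eq_norm_sq z]
    calc ‖(EuclideanSpace.equiv (Fin m) ℝ).symm (E *ᵥ z)‖^2
        ≤ (‖E‖ * ‖(EuclideanSpace.equiv (Fin m) ℝ).symm z‖)^2 := by
          apply pow_le_pow_left₀ (norm_nonneg _) h3
      _ = ‖E‖^2 * ‖(EuclideanSpace.equiv (Fin m) ℝ).symm z‖^2 := by ring
  have h4 : (z ⬝ᵥ (E *ᵥ z))^2 ≤ (‖E‖ * (z ⬝ᵥ z))^2 := by
    have h5 := dp_sq_le z (E *ᵥ z)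
    have h6 : 0 ≤ z ⬝ᵥ z := Finset.sum_nonneg fun i _ => mul_self_nonneg _
    calc (z ⬝ᵥ (E *ᵥ z))^2 ≤ (z ⬝ᵥ z) * ((E *ᵥ z) ⬝ᵥ (E *ᵥ z)) := h5
      _ ≤ (z ⬝ᵥ z) * (‖E‖^2 * (z ⬝ᵥ z)) := by
          exact mul_le_mul_of_nonneg_left h1 h6
      _ = (‖E‖ * (z ⬝ᵥ z))^2 := by ring
  have h7 : 0 ≤ ‖E‖ * (z ⬝ᵥ z) :=
    mul_nonneg (norm_nonneg _) (Finset.sum_nonneg fun i _ => mul_self_nonneg _)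
  rcases abs_cases (z ⬝ᵥ (E *ᵥ z)) with ⟨h8, _⟩ | ⟨h8, _⟩ <;> nlinarith
-- dot product identities
lemma dp_LLt {N r : ℕ} (L : Matrix (Fin N) (Fin r) ℝ) (x : Fin N → ℝ) :
    x ⬝ᵥ ((L * Lᵀ) *ᵥ x) = (Lᵀ *ᵥ x) ⬝ᵥ (Lᵀ *ᵥ x) := by
  rw [← Matrix.mulVec_mulVec, Matrix.dotProduct_mulVec x L, ← Matrix.mulVec_transpose]

lemma dp_Lv {N r : ℕ} (L : Matrix (Fin N) (Fin r) ℝ) (y : Fin r → ℝ) :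
    (L *ᵥ y) ⬝ᵥ (L *ᵥ y) = y ⬝ᵥ ((Lᵀ * L) *ᵥ y) := by
  rw [← Matrix.mulVec_mulVec, Matrix.dotProduct_mulVec (L *ᵥ y) L, ← Matrix.mulVec_transpose,
    Matrix.mulVec_mulVec]
  rw [dotProduct_comm, Matrix.dotProduct_mulVec]

-- tail bound: j ≥ r
lemma tail_bound {N r : ℕ} {L : Matrix (Fin N) (Fin r) ℝ} {S : Matrix (Fin N) (Fin N) ℝ}
    (hS : S.IsHermitian) {C₁ : ℝ} (hSe : ∀ i, hS.eigenvalues i ≤ C₁)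
    (hM : (L * Lᵀ + S).IsHermitian) (j : Fin N) (hj : r ≤ (j:ℕ)) :
    nthLargest hM.eigenvalues j ≤ C₁ := by
  refine nthLargest_le_of_subspace hM j (LinearMap.ker (Matrix.mulVecLin Lᵀ)) ?_ ?_
  · have h1 := LinearMap.finrank_range_add_finrank_ker (Matrix.mulVecLin Lᵀ)
    have h2 : Module.finrank ℝ (LinearMap.range (Matrix.mulVecLin Lᵀ)) ≤ r := by
      have := Submodule.finrank_le (LinearMap.range (Matrix.mulVecLin Lᵀ))
      rwa [finrank_pi_real, Fintype.card_fin] at this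
    have h3 : Module.finrank ℝ (Fin N → ℝ) = N := by
      rw [finrank_pi_real, Fintype.card_fin]
    have hjN := j.isLt
    omega
  · intro x hx
    have hx0 : Lᵀ *ᵥ x = 0 := LinearMap.mem_ker.mp hx
    rw [Matrix.add_mulVec, dotProduct_add, dp_LLt, hx0]
    simpa using quad_le_of_eig hS hSe x

lemma upper_bound {N r : ℕ} {L : Matrix (Fin N) (Fin r) ℝ} {S : Matrix (Fin N) (Fin N) ℝ}
    (hS : S.IsHermitian) {C₁ : ℝ} (hSe : ∀ i, hS.eigenvalues i ≤ C₁)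
    (hM : (L * Lᵀ + S).IsHermitian) {c : ℝ} (hc : 0 ≤ c)
    (hGq : ∀ z, z ⬝ᵥ ((Lᵀ * L) *ᵥ z) ≤ c * (z ⬝ᵥ z)) (j : Fin N) :
    nthLargest hM.eigenvalues j ≤ c + C₁ := by
  refine nthLargest_le_of_subspace hM j ⊤ ?_ ?_
  · rw [finrank_top, finrank_pi_real, Fintype.card_fin]
    omega
  · intro x _
    have ht : x ⬝ᵥ ((L * Lᵀ) *ᵥ x) ≤ c * (x ⬝ᵥ x) := by
      set z := Lᵀ *ᵥ x with hz
      have h0 : x ⬝ᵥ ((L * Lᵀ) *ᵥ x) = z ⬝ᵥ z := dp_LLt L x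
      have hCS : (x ⬝ᵥ (L *ᵥ z))^2 ≤ (x ⬝ᵥ x) * ((L *ᵥ z) ⬝ᵥ (L *ᵥ z)) := dp_sq_le x (L *ᵥ z)
      have hxLz : x ⬝ᵥ (L *ᵥ z) = z ⬝ᵥ z := by
        rw [Matrix.dotProduct_mulVec x L, ← Matrix.mulVec_transpose, ← hz]
      have hG : (L *ᵥ z) ⬝ᵥ (L *ᵥ z) = z ⬝ᵥ ((Lᵀ * L) *ᵥ z) := dp_Lv L z
      rw [hxLz, hG] at hCS
      have h5 := hGq z
      have hzz : 0 ≤ z ⬝ᵥ z := dp_self_nonneg z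
      have hxx : 0 ≤ x ⬝ᵥ x := dp_self_nonneg x
      rcases eq_or_lt_of_le hzz with heq | hlt
      · rw [h0, ← heq]
        positivity
      · rw [h0]
        nlinarith
    have hs := quad_le_of_eig hS hSe x
    rw [Matrix.add_mulVec, dotProduct_add]
    linarith

lemma lower_bound {N r : ℕ} {L : Matrix (Fin N) (Fin r) ℝ} {S : Matrix (Fin N) (Fin N) ℝ}
    (hS : S.IsHermitian) {C₂ : ℝ} (hC₂ : 0 < C₂) (hSe : ∀ i, C₂ ≤ hS.eigenvalues i)
    (hM : (L * Lᵀ + S).IsHermitian) {b : ℝ} (hb : 0 < b)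
    (hGq : ∀ z, b * (z ⬝ᵥ z) ≤ z ⬝ᵥ ((Lᵀ * L) *ᵥ z)) (j : Fin N) (hj : (j:ℕ) < r) :
    b ≤ nthLargest hM.eigenvalues j := by
  have hGh : (Lᵀ * L).IsHermitian := by
    simpa [conjTranspose_eq_transpose_of_trivial] using Matrix.isHermitian_conjTranspose_mul_self L
  have hGe : ∀ i, b ≤ hGh.eigenvalues i := eig_ge_of_quad hGh hGq
  have hker : LinearMap.ker (Matrix.mulVecLin L) = ⊥ := by
    rw [LinearMap.ker_eq_bot']
    intro y hy
    have h1 : L *ᵥ y = 0 := hy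
    have h2 := hGq y
    rw [← dp_Lv L y, h1] at h2
    simp only [zero_dotProduct] at h2
    have := dp_self_nonneg y
    have hyy : y ⬝ᵥ y = 0 := le_antisymm (by nlinarith) (dp_self_nonneg y)
    exact dotProduct_self_eq_zero.mp hyy
  refine nthLargest_ge_of_subspace hM j (LinearMap.range (Matrix.mulVecLin L)) ?_ ?_
  · have h1 := LinearMap.finrank_range_add_finrank_ker (Matrix.mulVecLin L)
    rw [hker, finrank_bot, finrank_pi_real, Fintype.card_fin] at h1
    omega
  · rintro x ⟨y, rfl⟩
    have hx' : Matrix.mulVecLin L y = L *ᵥ y := rfl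
    rw [hx']
    have e1 : (L *ᵥ y) ⬝ᵥ ((L * Lᵀ) *ᵥ (L *ᵥ y)) = ((Lᵀ * L) *ᵥ y) ⬝ᵥ ((Lᵀ * L) *ᵥ y) := by
      rw [dp_LLt, Matrix.mulVec_mulVec]
    have e2 : (L *ᵥ y) ⬝ᵥ (L *ᵥ y) = y ⬝ᵥ ((Lᵀ * L) *ᵥ y) := dp_Lv L y
    have e3 := quad_sq_ge hGh hb.le hGe y
    have e4 : C₂ * ((L *ᵥ y) ⬝ᵥ (L *ᵥ y)) ≤ (L *ᵥ y) ⬝ᵥ (S *ᵥ (L *ᵥ y)) :=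
      quad_ge_of_eig hS hSe (L *ᵥ y)
    have e5 : 0 ≤ (L *ᵥ y) ⬝ᵥ (L *ᵥ y) := dp_self_nonneg _
    rw [Matrix.add_mulVec, dotProduct_add, e1, e2]
    nlinarith

theorem spiked_eigenvalue_structure
    (r : ℕ) (C₁ C₂ : ℝ) (hC₂ : 0 < C₂) (hC : C₂ ≤ C₁)
    (Λ : (N : ℕ) → Matrix (Fin N) (Fin r) ℝ)
    (Su : (N : ℕ) → Matrix (Fin N) (Fin N) ℝ)
    (hu : ∀ N, (Su N).IsHermitian)
    (huEig : ∀ N (i : Fin N), C₂ ≤ (hu N).eigenvalues i ∧ (hu N).eigenvalues i ≤ C₁)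
    (SL : Matrix (Fin r) (Fin r) ℝ) (hSL : SL.PosDef) (hSLh : SL.IsHermitian)
    (hSLeig : ∀ i : Fin r, C₂ ≤ hSLh.eigenvalues i ∧ hSLh.eigenvalues i ≤ C₁)
    (hconv : Tendsto (fun N : ℕ => ‖(N : ℝ)⁻¹ • ((Λ N)ᵀ * Λ N) - SL‖) atTop (nhds 0))
    (hy : ∀ N, (Λ N * (Λ N)ᵀ + Su N).IsHermitian) :
    ∃ C₁' C₂' : ℝ, 0 < C₂' ∧ 0 < C₁' ∧
      ∃ ε₁ ε₂ : ℕ → ℝ, Tendsto ε₁ atTop (nhds 0) ∧ Tendsto ε₂ atTop (nhds 0) ∧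
        ∀ N (j : Fin N),
          ((j : ℕ) < r →
            (N : ℝ) * (C₂' + ε₁ N) ≤ nthLargest ((hy N).eigenvalues) j ∧
            nthLargest ((hy N).eigenvalues) j ≤ (N : ℝ) * (C₁' + ε₂ N)) ∧
          (r ≤ (j : ℕ) → nthLargest ((hy N).eigenvalues) j ≤ C₁) := by
  classical
  have hC₁ : 0 < C₁ := hC₂.trans_le hC
  set e : ℕ → ℝ := fun N => ‖(N : ℝ)⁻¹ • ((Λ N)ᵀ * Λ N) - SL‖ with he_def
  have he0 : ∀ N, 0 ≤ e N := fun N => norm_nonneg _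
  have he : Tendsto e atTop (nhds 0) := hconv
  -- decomposition of the Gram matrix
  have hGq : ∀ N (z : Fin r → ℝ), z ⬝ᵥ (((Λ N)ᵀ * Λ N) *ᵥ z) =
      (N:ℝ) * (z ⬝ᵥ (SL *ᵥ z) + z ⬝ᵥ (((N : ℝ)⁻¹ • ((Λ N)ᵀ * Λ N) - SL) *ᵥ z)) := by
    intro N z
    rcases Nat.eq_zero_or_pos N with hN | hN
    · subst hN
      have hG0 : (Λ 0)ᵀ * Λ 0 = 0 := by
        ext i j
        simp [Matrix.mul_apply]
      rw [hG0]
      simp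
    · have hN' : ((N:ℝ)) ≠ 0 := Nat.cast_ne_zero.mpr hN.ne'
      have hGfact : (Λ N)ᵀ * Λ N =
          (N:ℝ) • (SL + ((N : ℝ)⁻¹ • ((Λ N)ᵀ * Λ N) - SL)) := by
        rw [add_sub_cancel, smul_smul, mul_inv_cancel₀ hN', one_smul]
      conv_lhs => rw [hGfact]
      rw [Matrix.smul_mulVec, dotProduct_smul, smul_eq_mul,
        Matrix.add_mulVec, dotProduct_add]
  have hGub : ∀ N (z : Fin r → ℝ),
      z ⬝ᵥ (((Λ N)ᵀ * Λ N) *ᵥ z) ≤ ((N:ℝ) * (C₁ + e N)) * (z ⬝ᵥ z) := by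
    intro N z
    have h1 := quad_le_of_eig hSLh (fun i => (hSLeig i).2) z
    have h2 := (abs_le.mp (quad_abs_le ((N : ℝ)⁻¹ • ((Λ N)ᵀ * Λ N) - SL) z)).2
    have hNn : (0:ℝ) ≤ N := Nat.cast_nonneg N
    rw [hGq N z]
    calc (N:ℝ) * (z ⬝ᵥ (SL *ᵥ z) + z ⬝ᵥ (((N : ℝ)⁻¹ • ((Λ N)ᵀ * Λ N) - SL) *ᵥ z))
        ≤ (N:ℝ) * ((C₁ + e N) * (z ⬝ᵥ z)) :=
          mul_le_mul_of_nonneg_left (by rw [add_mul]; exact add_le_add h1 h2) hNn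
      _ = ((N:ℝ) * (C₁ + e N)) * (z ⬝ᵥ z) := by ring
  have hGlb : ∀ (N : ℕ) (z : Fin r → ℝ),
      ((N:ℝ) * (C₂ - e N)) * (z ⬝ᵥ z) ≤ z ⬝ᵥ (((Λ N)ᵀ * Λ N) *ᵥ z) := by
    intro N z
    have h1 := quad_ge_of_eig hSLh (fun i => (hSLeig i).1) z
    have h2 := (abs_le.mp (quad_abs_le ((N : ℝ)⁻¹ • ((Λ N)ᵀ * Λ N) - SL) z)).1
    have hNn : (0:ℝ) ≤ N := Nat.cast_nonneg N
    rw [hGq N z]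
    calc ((N:ℝ) * (C₂ - e N)) * (z ⬝ᵥ z) = (N:ℝ) * ((C₂ - e N) * (z ⬝ᵥ z)) := by ring
      _ ≤ (N:ℝ) * (z ⬝ᵥ (SL *ᵥ z) + z ⬝ᵥ (((N : ℝ)⁻¹ • ((Λ N)ᵀ * Λ N) - SL) *ᵥ z)) :=
          mul_le_mul_of_nonneg_left (by rw [sub_mul]; linarith) hNn
  -- the three spectral facts
  have fact_tail : ∀ N (j : Fin N), r ≤ (j:ℕ) → nthLargest ((hy N).eigenvalues) j ≤ C₁ :=
    fun N j hj => tail_bound (hu N) (fun i => (huEig N i).2) (hy N) j hj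
  have fact_upper : ∀ N (j : Fin N),
      nthLargest ((hy N).eigenvalues) j ≤ (N:ℝ) * (C₁ + e N) + C₁ := by
    intro N j
    refine upper_bound (hu N) (fun i => (huEig N i).2) (hy N) ?_ (hGub N) j
    have := he0 N
    positivity
  have fact_lower : ∀ N, e N < C₂ → ∀ (j : Fin N), (j:ℕ) < r →
      (N:ℝ) * (C₂ - e N) ≤ nthLargest ((hy N).eigenvalues) j := by
    intro N heN j hj
    have hN0 : 0 < N := j.pos
    refine lower_bound (hu N) hC₂ (fun i => (huEig N i).1) (hy N) ?_ (hGlb N) j hj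
    have : (0:ℝ) < N := Nat.cast_pos.mpr hN0
    nlinarith
  -- the error sequences
  set ε₁ : ℕ → ℝ := fun N => min 0 (⨅ i : Fin (min r N),
    (nthLargest ((hy N).eigenvalues) (Fin.castLE (Nat.min_le_right r N) i) / N - C₂)) with hε₁
  set ε₂ : ℕ → ℝ := fun N => max 0 (⨆ i : Fin (min r N),
    (nthLargest ((hy N).eigenvalues) (Fin.castLE (Nat.min_le_right r N) i) / N - C₁)) with hε₂
  have htend₁ : Tendsto ε₁ atTop (nhds 0) := by
    have hub : ∀ N, ε₁ N ≤ 0 := fun N => min_le_left _ _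
    have hev : ∀ᶠ N in atTop, e N < C₂ := he.eventually_lt_const hC₂
    have hlb : ∀ᶠ N in atTop, -(e N) ≤ ε₁ N := by
      filter_upwards [hev] with N heN
      refine le_min (by linarith [he0 N]) ?_
      rcases isEmpty_or_nonempty (Fin (min r N)) with hemp | hne
      · rw [Real.iInf_of_isEmpty]
        linarith [he0 N]
      · refine le_ciInf fun i => ?_
        have hiN : (i : ℕ) < N := lt_of_lt_of_le i.isLt (Nat.min_le_right r N)
        have hir : (i : ℕ) < r := lt_of_lt_of_le i.isLt (Nat.min_le_left r N)
        have hN0 : 0 < N := lt_of_le_of_lt (Nat.zero_le _) hiN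
        have hNR : (0:ℝ) < N := Nat.cast_pos.mpr hN0
        have hl := fact_lower N heN (Fin.castLE (Nat.min_le_right r N) i) hir
        rw [le_sub_iff_add_le, le_div_iff₀ hNR]
        nlinarith [hl]
    exact tendsto_of_tendsto_of_tendsto_of_le_of_le' (by simpa using he.neg)
      tendsto_const_nhds hlb (Eventually.of_forall hub)
  have htend₂ : Tendsto ε₂ atTop (nhds 0) := by
    have hlb : ∀ N, 0 ≤ ε₂ N := fun N => le_max_left _ _
    have hub : ∀ᶠ N in atTop, ε₂ N ≤ e N + C₁ / N := by
      filter_upwards [eventually_gt_atTop 0] with N hN0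
      have hNR : (0:ℝ) < N := Nat.cast_pos.mpr hN0
      refine max_le ?_ ?_
      · have := he0 N
        positivity
      · rcases isEmpty_or_nonempty (Fin (min r N)) with hemp | hne
        · rw [Real.iSup_of_isEmpty]
          have := he0 N
          positivity
        · refine ciSup_le fun i => ?_
          have hup := fact_upper N (Fin.castLE (Nat.min_le_right r N) i)
          rw [sub_le_iff_le_add, div_le_iff₀ hNR]
          calc nthLargest ((hy N).eigenvalues) (Fin.castLE (Nat.min_le_right r N) i)
              ≤ (N:ℝ) * (C₁ + e N) + C₁ := hup
            _ = (e N + C₁ / ↑N + C₁) * ↑N := by field_simp; ring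
    have haux : Tendsto (fun N : ℕ => e N + C₁ / N) atTop (nhds 0) := by
      have h2 : Tendsto (fun N : ℕ => C₁ / (N:ℝ)) atTop (nhds 0) :=
        tendsto_const_div_atTop_nhds_zero_nat C₁
      simpa using he.add h2
    exact tendsto_of_tendsto_of_tendsto_of_le_of_le' tendsto_const_nhds haux
      (Eventually.of_forall hlb) hub
  refine ⟨C₁, C₂, hC₂, hC₁, ε₁, ε₂, htend₁, htend₂, ?_⟩
  intro N j
  constructor
  · intro hjr
    have hjN : (j:ℕ) < min r N := lt_min hjr j.isLt
    set i : Fin (min r N) := ⟨(j:ℕ), hjN⟩ with hi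
    have hcast : Fin.castLE (Nat.min_le_right r N) i = j := by
      apply Fin.ext
      rfl
    have hNR : (0:ℝ) < N := Nat.cast_pos.mpr j.pos
    constructor
    · have h1 : ε₁ N ≤ nthLargest ((hy N).eigenvalues) j / N - C₂ := by
        refine (min_le_right _ _).trans ?_
        have := ciInf_le (f := fun k : Fin (min r N) =>
          nthLargest ((hy N).eigenvalues) (Fin.castLE (Nat.min_le_right r N) k) / N - C₂)
          (Set.Finite.bddBelow (Set.finite_range _)) i
        rwa [hcast] at this
      calc (N:ℝ) * (C₂ + ε₁ N) ≤ (N:ℝ) * (C₂ + (nthLargest ((hy N).eigenvalues) j / N - C₂)) :=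
            mul_le_mul_of_nonneg_left (by linarith) hNR.le
        _ = nthLargest ((hy N).eigenvalues) j := by field_simp; ring
    · have h1 : nthLargest ((hy N).eigenvalues) j / N - C₁ ≤ ε₂ N := by
        refine le_trans ?_ (le_max_right _ _)
        have := le_ciSup (f := fun k : Fin (min r N) =>
          nthLargest ((hy N).eigenvalues) (Fin.castLE (Nat.min_le_right r N) k) / N - C₁)
          (Set.Finite.bddAbove (Set.finite_range _)) i
        rwa [hcast] at this
      calc nthLargest ((hy N).eigenvalues) j
          = (N:ℝ) * (C₁ + (nthLargest ((hy N).eigenvalues) j / N - C₁)) := by field_simp; ring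
        _ ≤ (N:ℝ) * (C₁ + ε₂ N) := mul_le_mul_of_nonneg_left (by linarith) hNR.le
  · exact fact_tail N j
end

section
/- Let λ̂₁ ≥ ⋯ ≥ λ̂_m > 0 and V_j = Σ_{i=j+1}^m λ̂_i for j = 0,…,m−1. Then for every 1 ≤ j ≤ m−2, ln(1 + λ̂_j/V_{j−1}) / ln(1 + λ̂_{j+1}/V_j) ≤ λ̂_j / λ̂_{j+1}. -/
theorem tcr_ratio_upper_bound
    (m : ℕ) (lam : ℕ → ℝ)
    (hanti : ∀ i j, 1 ≤ i → i ≤ j → j ≤ m → lam j ≤ lam i)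
    (hpos : ∀ j, 1 ≤ j → j ≤ m → 0 < lam j)
    (V : ℕ → ℝ) (hV : ∀ j, V j = ∑ i ∈ Finset.Icc (j + 1) m, lam i)
    (j : ℕ) (hj : 1 ≤ j) (hjm : j ≤ m - 2) :
    Real.log (1 + lam j / V (j - 1)) / Real.log (1 + lam (j + 1) / V j)
      ≤ lam j / lam (j + 1) := by
  have hm : 3 ≤ m := by omega
  have ha : 0 < lam j := hpos _ hj (by omega)
  have hb : 0 < lam (j + 1) := hpos _ (by omega) (by omega)
  have hba : lam (j + 1) ≤ lam j := hanti j (j + 1) hj (by omega) (by omega)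
  have hW : 0 < V j := by
    rw [hV]
    apply Finset.sum_pos
    · intro i hi
      simp only [Finset.mem_Icc] at hi
      exact hpos i (by omega) hi.2
    · exact ⟨j + 1, by simp only [Finset.mem_Icc]; omega⟩
  have hsplit : V (j - 1) = lam j + V j := by
    rw [hV, hV]
    have hI : Finset.Icc (j - 1 + 1) m = insert j (Finset.Icc (j + 1) m) := by
      ext x; simp only [Finset.mem_Icc, Finset.mem_insert]; omega
    rw [hI, Finset.sum_insert (by simp only [Finset.mem_Icc]; omega)]
  set a := lam j with hadef
  set b := lam (j + 1) with hbdef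
  set W := V j with hWdef
  rw [hsplit]
  have h1 : Real.log (1 + a / (a + W)) ≤ a / (a + W) := by
    have := Real.log_le_sub_one_of_pos (x := 1 + a / (a + W)) (by positivity)
    linarith
  have h2 : b / (W + b) ≤ Real.log (1 + b / W) := by
    have h := Real.log_le_sub_one_of_pos (x := (1 + b / W)⁻¹) (by positivity)
    rw [Real.log_inv] at h
    have heq : (1 + b / W)⁻¹ = W / (W + b) := by
      rw [eq_div_iff (by positivity)]
      field_simp
    rw [heq] at h
    have h3 : W / (W + b) - 1 = -(b / (W + b)) := by
      field_simp
      ring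
    linarith
  have hlogpos : 0 < Real.log (1 + b / W) := by
    apply Real.log_pos
    have : 0 < b / W := by positivity
    linarith
  rw [div_le_div_iff₀ hlogpos hb]
  have hmid : a / (a + W) * b ≤ a * (b / (W + b)) := by
    rw [div_mul_eq_mul_div, mul_div_assoc']
    apply div_le_div_of_nonneg_left (by positivity) (by positivity)
    linarith
  have hnum : Real.log (1 + a / (a + W)) * b ≤ a / (a + W) * b := by
    apply mul_le_mul_of_nonneg_right h1 hb.le
  have hden : a * (b / (W + b)) ≤ a * Real.log (1 + b / W) := by
    apply mul_le_mul_of_nonneg_left h2 ha.le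
  linarith
end

section
/- Let λ̂₁ ≥ ⋯ ≥ λ̂_m > 0 and V_j = Σ_{i=j+1}^m λ̂_i. Then for every 1 ≤ j ≤ m−2, ln(1 + λ̂_j/V_{j−1}) / ln(1 + λ̂_{j+1}/V_j) ≥ (λ̂_j/λ̂_{j+1}) · V_j/(V_{j−1} + λ̂_j). -/
theorem tcr_ratio_lower_bound
    (m : ℕ) (lam : ℕ → ℝ)
    (hanti : ∀ i j, 1 ≤ i → i ≤ j → j ≤ m → lam j ≤ lam i)
    (hpos : ∀ j, 1 ≤ j → j ≤ m → 0 < lam j)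
    (V : ℕ → ℝ) (hV : ∀ j, V j = ∑ i ∈ Finset.Icc (j + 1) m, lam i)
    (j : ℕ) (hj : 1 ≤ j) (hjm : j ≤ m - 2) :
    (lam j / lam (j + 1)) * (V j / (V (j - 1) + lam j))
      ≤ Real.log (1 + lam j / V (j - 1)) / Real.log (1 + lam (j + 1) / V j) := by
  have hm : 3 ≤ m := by omega
  have hjm' : j + 1 ≤ m := by omega
  have hja : 1 ≤ j ∧ j ≤ m := ⟨hj, by omega⟩
  have ha : 0 < lam j := hpos j hj (by omega)
  have hb : 0 < lam (j + 1) := hpos (j + 1) (by omega) hjm'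
  have hVj : 0 < V j := by
    rw [hV]
    apply Finset.sum_pos
    · intro i hi
      simp only [Finset.mem_Icc] at hi
      exact hpos i (by omega) hi.2
    · exact ⟨j + 1, Finset.mem_Icc.mpr ⟨le_refl _, hjm'⟩⟩
  have hsplit : V (j - 1) = lam j + V j := by
    rw [hV, hV]
    have : j - 1 + 1 = j := by omega
    rw [this]
    rw [show Finset.Icc j m = insert j (Finset.Icc (j + 1) m) by
      ext x; simp [Finset.mem_Icc]; omega]
    rw [Finset.sum_insert (by simp)]
  have hVm : 0 < V (j - 1) := by rw [hsplit]; positivity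
  -- lower bound for numerator log
  have hnum : lam j / (V (j - 1) + lam j) ≤ Real.log (1 + lam j / V (j - 1)) := by
    have h1 : (0:ℝ) < 1 + lam j / V (j - 1) := by positivity
    have := Real.one_sub_inv_le_log_of_pos h1
    refine le_trans (le_of_eq ?_) this
    rw [inv_eq_one_div]
    field_simp
    ring
  -- upper bound for denominator log
  have hden : Real.log (1 + lam (j + 1) / V j) ≤ lam (j + 1) / V j := by
    have h1 : (0:ℝ) < 1 + lam (j + 1) / V j := by positivity
    have := Real.log_le_sub_one_of_pos h1
    linarith
  have hdenpos : 0 < Real.log (1 + lam (j + 1) / V j) := by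
    apply Real.log_pos
    have : 0 < lam (j + 1) / V j := by positivity
    linarith
  have hkey : (lam j / (V (j - 1) + lam j)) / (lam (j + 1) / V j)
      ≤ Real.log (1 + lam j / V (j - 1)) / Real.log (1 + lam (j + 1) / V j) := by
    apply div_le_div₀ (Real.log_nonneg (by nlinarith [div_pos ha hVm])) hnum hdenpos hden
  refine le_trans (le_of_eq ?_) hkey
  field_simp
end
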